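/- Let p be an odd prime, n a positive integer with ν := ν_p(n), and t a nonnegative integer. For every commutative ring R and every formal power series f = Σ_{k≥0} a(k)qᵏ over R, the coefficient of qⁿ in (U_p + V_p)^t f equals Σ_{i = −ν}^{t} c_{p,t,i}(n) · a(p^i n), where the sum is over integers i with −ν ≤ i ≤ t (only terms with i ≡ t (mod 2) are nonzero). -/

import Mathlib

/-- `U_p f := Σ a(pk) qᵏ`. -/
noncomputable def Uop (R : Type*) [CommRing R] (p : ℕ) (f : PowerSeries R) : PowerSeries R :=
  PowerSeries.mk fun k => PowerSeries.coeff (p * k) f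

/-- `V_p f := Σ a(k) q^{pk}`. -/
noncomputable def Vop (R : Type*) [CommRing R] (p : ℕ) (f : PowerSeries R) : PowerSeries R :=
  PowerSeries.mk fun k => if p ∣ k then PowerSeries.coeff (k / p) f else 0

/-- The coefficients `c_{p,t,i}(n)`, depending only on `ν := ν_p(n)`. -/
def crec (ν : ℕ) : ℕ → ℤ → ℤ
  | 0, i => if i = 0 then 1 else 0
  | t + 1, i =>
    if ((t : ℤ) + 1 < i) ∨ (i < max (-(ν : ℤ)) (-((t : ℤ) + 1))) then 0
    else crec ν t (i - 1) + crec ν t (i + 1)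

/-- `p^i · n` for `i ∈ ℤ` (exact division when `i < 0` and `p^{−i} ∣ n`). -/
def pPow (p n : ℕ) (i : ℤ) : ℕ := p ^ i.toNat * n / p ^ (-i).toNat

lemma crec_zero (ν t : ℕ) (i : ℤ) (h : (t:ℤ) < i ∨ i < max (-(ν:ℤ)) (-(t:ℤ))) :
    crec ν t i = 0 := by
  cases t with
  | zero => simp only [crec]; rw [if_neg]; omega
  | succ t => rw [crec, if_pos]; push_cast at h ⊢; omega

lemma crec_succ (ν t : ℕ) (j : ℤ) (hj : -(ν:ℤ) ≤ j) :
    crec ν (t+1) j = crec ν t (j-1) + crec ν t (j+1) := by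
  rw [crec]
  split
  · rename_i h
    rw [crec_zero ν t (j-1) (by omega), crec_zero ν t (j+1) (by omega)]
    ring
  · rfl

lemma pPow_eq (p m ν : ℕ) (hp : 0 < p) (i : ℤ) (hi : -(ν:ℤ) ≤ i) :
    pPow p (p^ν * m) i = p^((i+ν).toNat) * m := by
  unfold pPow
  rcases le_or_gt 0 i with h | h
  · have h1 : (-i).toNat = 0 := by omega
    have h2 : (i+ν).toNat = i.toNat + ν := by omega
    rw [h1, h2, pow_zero, Nat.div_one, pow_add, mul_assoc]
  · have h1 : i.toNat = 0 := by omega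
    have h2 : (i+ν).toNat = ν - (-i).toNat := by omega
    rw [h1, pow_zero, one_mul, h2]
    have h3 : p^ν = p^(ν - (-i).toNat) * p^((-i).toNat) := by
      rw [← pow_add]; congr 1; omega
    rw [h3, mul_assoc, mul_comm (p^((-i).toNat)) m, ← mul_assoc,
      Nat.mul_div_cancel _ (pow_pos hp _)]

lemma sum_shift {M : Type*} [AddCommMonoid M] (a b c : ℤ) (F : ℤ → M) :
    ∑ i ∈ Finset.Icc a b, F (i + c) = ∑ j ∈ Finset.Icc (a+c) (b+c), F j := by
  rw [← Finset.map_add_right_Icc, Finset.sum_map]; rfl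

lemma coeff_UV (R : Type*) [CommRing R] (p k : ℕ) (f : PowerSeries R) :
    PowerSeries.coeff k (Uop R p f + Vop R p f) =
      PowerSeries.coeff (p*k) f + if p ∣ k then PowerSeries.coeff (k/p) f else 0 := by
  simp [Uop, Vop]

/-- Equation (5.8): the coefficient of `qⁿ` in `(U_p + V_p)^t f` is
`Σ_{−ν ≤ i ≤ t} c_{p,t,i}(n) · a(pⁱ n)`. -/
theorem stmt12 (p : ℕ) (hp : p.Prime) (hp2 : p ≠ 2) (n : ℕ) (hn : 0 < n) (t : ℕ)
    (R : Type*) [CommRing R] (f : PowerSeries R) :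
    PowerSeries.coeff n ((fun g => Uop R p g + Vop R p g)^[t] f) =
      ∑ i ∈ Finset.Icc (-(padicValNat p n : ℤ)) (t : ℤ),
        crec (padicValNat p n) t i • PowerSeries.coeff (pPow p n i) f := by
  have hfact : Fact p.Prime := ⟨hp⟩
  set ν := padicValNat p n with hν
  obtain ⟨m, hm⟩ : p ^ ν ∣ n := pow_padicValNat_dvd
  have hpm : ¬ p ∣ m := by
    intro hd
    apply pow_succ_padicValNat_not_dvd (p := p) hn.ne'
    rw [← hν, pow_succ, hm]
    exact mul_dvd_mul_left _ hd
  have hA : ∀ i : ℤ, -(ν:ℤ) ≤ i → pPow p n i = p^((i+ν).toNat) * m := fun i hi => by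
    rw [hm]; exact pPow_eq p m ν hp.pos i hi
  induction t generalizing f with
  | zero =>
    simp only [Function.iterate_zero, id]
    rw [Finset.sum_eq_single 0]
    · have : pPow p n 0 = n := by
        rw [hA 0 (by omega)]; simp [hm]
      simp [crec, this]
    · intro i hi hne
      have : crec ν 0 i = 0 := by simp [crec, hne]
      rw [this, zero_smul]
    · intro h
      exact absurd (Finset.mem_Icc.mpr ⟨by omega, by omega⟩) h
  | succ t ih =>
    rw [Function.iterate_succ_apply, ih]
    set B : ℤ → R := fun i =>
      if -(ν:ℤ) < i then PowerSeries.coeff (pPow p n (i-1)) f else 0 with hB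
    have key : ∀ i ∈ Finset.Icc (-(ν:ℤ)) (t:ℤ),
        crec ν t i • PowerSeries.coeff (pPow p n i) (Uop R p f + Vop R p f) =
        crec ν t i • PowerSeries.coeff (pPow p n (i+1)) f + crec ν t i • B i := by
      intro i hi
      rw [Finset.mem_Icc] at hi
      rw [coeff_UV]
      have e1 : p * pPow p n i = pPow p n (i+1) := by
        rw [hA i hi.1, hA (i+1) (by omega), ← mul_assoc, ← pow_succ']
        congr 2; omega
      rw [e1, smul_add]
      congr 1
      rw [hA i hi.1, hB]
      by_cases hlt : -(ν:ℤ) < i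
      · have hdvd : p ∣ p^((i+ν).toNat) * m :=
          Dvd.dvd.mul_right (dvd_pow_self p (by omega)) m
        rw [if_pos hdvd]
        have e2 : p^((i+ν).toNat) * m / p = pPow p n (i-1) := by
          rw [hA (i-1) (by omega)]
          have : (i+ν).toNat = (i-1+ν).toNat + 1 := by omega
          rw [this, pow_succ, mul_comm (p ^ ((i-1+ν).toNat)) p, mul_assoc,
            Nat.mul_div_cancel_left _ hp.pos]
        rw [e2]
        simp only [if_pos hlt]
      · have h0 : (i+ν).toNat = 0 := by omega
        rw [h0, pow_zero, one_mul, if_neg hpm]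
        simp only [if_neg hlt, smul_zero]
    rw [Finset.sum_congr rfl key, Finset.sum_add_distrib]
    have hS1 : ∑ i ∈ Finset.Icc (-(ν:ℤ)) (t:ℤ),
        crec ν t i • PowerSeries.coeff (pPow p n (i+1)) f
        = ∑ j ∈ Finset.Icc (-(ν:ℤ)) ((t:ℤ)+1),
            crec ν t (j-1) • PowerSeries.coeff (pPow p n j) f := by
      have := sum_shift (-(ν:ℤ)) (t:ℤ) 1
        (fun j => crec ν t (j-1) • PowerSeries.coeff (pPow p n j) f)
      simp only [add_sub_cancel_right] at this
      rw [this]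
      apply Finset.sum_subset
      · intro x hx; rw [Finset.mem_Icc] at *; omega
      · intro x hx hxn
        rw [Finset.mem_Icc] at *
        have : x - 1 < max (-(ν:ℤ)) (-(t:ℤ)) := by omega
        rw [crec_zero ν t _ (Or.inr this), zero_smul]
    have hS2 : ∑ i ∈ Finset.Icc (-(ν:ℤ)) (t:ℤ), crec ν t i • B i
        = ∑ j ∈ Finset.Icc (-(ν:ℤ)) ((t:ℤ)+1),
            crec ν t (j+1) • PowerSeries.coeff (pPow p n j) f := by
      have hsh := sum_shift (-(ν:ℤ)-1) ((t:ℤ)-1) 1 (fun i => crec ν t i • B i)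
      simp only [sub_add_cancel] at hsh
      rw [← hsh]
      have step1 : ∑ j ∈ Finset.Icc (-(ν:ℤ)-1) ((t:ℤ)-1), crec ν t (j+1) • B (j+1)
          = ∑ j ∈ Finset.Icc (-(ν:ℤ)-1) ((t:ℤ)+1), crec ν t (j+1) • B (j+1) := by
        apply Finset.sum_subset
        · intro x hx; rw [Finset.mem_Icc] at *; omega
        · intro x hx hxn
          rw [Finset.mem_Icc] at *
          rw [crec_zero ν t _ (Or.inl (by omega)), zero_smul]
      have step2 : ∑ j ∈ Finset.Icc (-(ν:ℤ)) ((t:ℤ)+1), crec ν t (j+1) • B (j+1)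
          = ∑ j ∈ Finset.Icc (-(ν:ℤ)-1) ((t:ℤ)+1), crec ν t (j+1) • B (j+1) := by
        apply Finset.sum_subset
        · intro x hx; rw [Finset.mem_Icc] at *; omega
        · intro x hx hxn
          rw [Finset.mem_Icc] at *
          have hx1 : x = -(ν:ℤ)-1 := by omega
          have : B (x+1) = 0 := by rw [hB]; simp only [hx1]; rw [if_neg (by omega)]
          rw [this, smul_zero]
      rw [step1, ← step2]
      apply Finset.sum_congr rfl
      intro j hj
      rw [Finset.mem_Icc] at hj
      congr 1
      rw [hB]
      simp only [add_sub_cancel_right]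
      rw [if_pos (by omega)]
    rw [hS1, hS2, ← Finset.sum_add_distrib]
    have hc : ((t+1 : ℕ) : ℤ) = (t:ℤ)+1 := by push_cast; ring
    rw [hc]
    apply Finset.sum_congr rfl
    intro j hj
    rw [Finset.mem_Icc] at hj
    rw [crec_succ ν t j hj.1, add_smul]
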